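/- Let p be a prime, K a field of characteristic p, L = K(X) the rational function field over K, and F = K(X^p) the intermediate field generated over K by X^p. Then for every set S of K-algebra automorphisms of L, the fixed field {x ∈ L : σ(x) = x for all σ ∈ S} is not equal to F. (Indeed, any K-automorphism of L fixing X^p fixes X, hence is the identity, so if every σ ∈ S fixes F pointwise the fixed field is all of L, which properly contains F.) -/

import Mathlib

theorem adjoin_X_pow_p_not_fixed_field (p : ℕ) (hp : p.Prime)
    (K : Type*) [Field K] [CharP K p]
    (S : Set (RatFunc K ≃ₐ[K] RatFunc K)) :
    {x : RatFunc K | ∀ σ ∈ S, σ x = x} ≠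
      (IntermediateField.adjoin K {(RatFunc.X : RatFunc K) ^ p} :
        IntermediateField K (RatFunc K)) := by
  have hchar : CharP (RatFunc K) p :=
    charP_of_injective_algebraMap (algebraMap K (RatFunc K)).injective p
  intro h
  -- X^p is in the adjoined field, hence fixed by every σ ∈ S
  have hXp : (RatFunc.X : RatFunc K) ^ p ∈
      (IntermediateField.adjoin K {(RatFunc.X : RatFunc K) ^ p} :
        IntermediateField K (RatFunc K)) :=
    IntermediateField.subset_adjoin K _ rfl
  have hXp' : (RatFunc.X : RatFunc K) ^ p ∈ {x : RatFunc K | ∀ σ ∈ S, σ x = x} := by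
    rw [h]; exact hXp
  -- hence every σ ∈ S fixes X (Frobenius injectivity)
  have hX : (RatFunc.X : RatFunc K) ∈ {x : RatFunc K | ∀ σ ∈ S, σ x = x} := by
    intro σ hσ
    have heq := hXp' σ hσ
    rw [map_pow] at heq
    haveI : Fact p.Prime := ⟨hp⟩
    exact frobenius_inj (RatFunc K) p heq
  rw [h, SetLike.mem_coe, IntermediateField.mem_adjoin_simple_iff] at hX
  obtain ⟨r, s, hrs⟩ := hX
  -- rewrite aeval at X^p as algebraMap of expand
  have key : ∀ q : Polynomial K,
      Polynomial.aeval ((RatFunc.X : RatFunc K) ^ p) q =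
        algebraMap (Polynomial K) (RatFunc K) (Polynomial.expand K p q) := by
    intro q
    rw [← Polynomial.expand_aeval, ← RatFunc.algebraMap_X,
      Polynomial.aeval_algebraMap_apply, Polynomial.aeval_X_left_apply]
  rw [key, key] at hrs
  by_cases hs : Polynomial.expand K p s = 0
  · rw [hs, map_zero, div_zero] at hrs
    exact RatFunc.X_ne_zero hrs
  · have hsne : algebraMap (Polynomial K) (RatFunc K) (Polynomial.expand K p s) ≠ 0 := by
      simpa [map_eq_zero_iff _ (RatFunc.algebraMap_injective K)] using hs
    rw [eq_div_iff hsne] at hrs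
    have hXeq : (Polynomial.X : Polynomial K) * Polynomial.expand K p s =
        Polynomial.expand K p r := by
      apply RatFunc.algebraMap_injective K
      rw [map_mul, RatFunc.algebraMap_X]
      exact hrs
    have hr0 : r ≠ 0 := by
      intro h0
      rw [h0, map_zero] at hXeq
      exact hs (by simpa [Polynomial.X_ne_zero] using mul_eq_zero.mp hXeq)
    have hs0 : s ≠ 0 := fun h0 => hs (by simp [h0])
    have hdeg := congrArg Polynomial.natDegree hXeq
    rw [Polynomial.natDegree_mul Polynomial.X_ne_zero hs, Polynomial.natDegree_X,
      Polynomial.natDegree_expand, Polynomial.natDegree_expand] at hdeg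
    -- 1 + s.natDegree * p = r.natDegree * p : contradiction mod p
    have h1 : p ∣ 1 + s.natDegree * p := hdeg ▸ Dvd.intro r.natDegree (mul_comm _ _)
    have hdvd : p ∣ 1 := (Nat.dvd_add_right (Dvd.intro s.natDegree (mul_comm _ _))).mp (by rwa [add_comm] at h1)
    exact hp.one_lt.ne' (Nat.dvd_one.mp hdvd)
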